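/- Let G : ℝ^m → ℝ be μ-strongly convex (μ > 0) and let S be a real m×m symmetric positive semidefinite matrix. For each y ∈ ℝ^m, the function λ ↦ G(λ) + ⟨y, Sλ⟩ has a unique minimizer λ(y), and the function F(y) := sup_{λ∈ℝ^m} (−G(λ) − ⟨y, Sλ⟩) = −(G(λ(y)) + ⟨y, Sλ(y)⟩) is real-valued, convex, and differentiable with ∇F(y) = −S λ(y). Moreover, the map y ↦ λ(y) is (λmax(S)/μ)-Lipschitz and F is (λmax(S)²/μ)-smooth. -/

import Mathlib

open scoped RealInnerProductSpace
open Matrix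

lemma aux_min_ineq {E : Type*} [NormedAddCommGroup E] [InnerProductSpace ℝ E]
    {μ : ℝ} (hμ : 0 < μ) {f : E → ℝ}
    (hf : ConvexOn ℝ Set.univ fun x => f x - μ / 2 * ‖x‖ ^ 2)
    {x₀ : E} (hmin : ∀ x, f x₀ ≤ f x) (x : E) :
    f x₀ + μ / 2 * ‖x - x₀‖ ^ 2 ≤ f x := by
  have sc : StrongConvexOn Set.univ μ f := strongConvexOn_iff_convex.mpr hf
  set q : ℝ := μ / 2 * ‖x - x₀‖ ^ 2 with hq
  have hq0 : 0 ≤ q := by positivity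
  have key : ∀ t : ℝ, 0 < t → t < 1 → f x₀ + (1 - t) * q ≤ f x := by
    intro t ht0 ht1
    have h := sc.2 (Set.mem_univ x) (Set.mem_univ x₀) (le_of_lt ht0)
      (by linarith : (0:ℝ) ≤ 1 - t) (by ring)
    have h2 := hmin (t • x + (1 - t) • x₀)
    simp only [smul_eq_mul] at h
    rw [← hq] at h
    nlinarith [h, h2, mul_pos ht0 (sub_pos.mpr ht1)]
  refine le_of_forall_pos_le_add fun ε hε => ?_
  rcases le_or_gt q 0 with h | h
  · have := key (1/2) one_half_pos (by norm_num); nlinarith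
  · set t := min (1/2 : ℝ) (ε / q) with ht
    have ht0 : 0 < t := lt_min one_half_pos (div_pos hε h)
    have ht1 : t < 1 := lt_of_le_of_lt (min_le_left _ _) (by norm_num)
    have htq : t * q ≤ ε := by
      calc t * q ≤ (ε / q) * q := by gcongr; exact min_le_right _ _
      _ = ε := div_mul_cancel₀ _ (ne_of_gt h)
    have := key t ht0 ht1
    nlinarith

lemma aux_exists_min {E : Type*} [NormedAddCommGroup E] [InnerProductSpace ℝ E]
    [FiniteDimensional ℝ E] {μ : ℝ} (hμ : 0 < μ) {f : E → ℝ}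
    (hf : ConvexOn ℝ Set.univ fun x => f x - μ / 2 * ‖x‖ ^ 2) :
    ∃ x₀, ∀ x, f x₀ ≤ f x := by
  have hgc : Continuous (fun x : E => f x - μ / 2 * ‖x‖ ^ 2) := by
    rw [← continuousOn_univ]
    exact hf.continuousOn isOpen_univ
  have hfc : Continuous f := by
    have : f = fun x => (f x - μ / 2 * ‖x‖ ^ 2) + μ / 2 * ‖x‖ ^ 2 := by funext x; ring
    rw [this]
    exact hgc.add (continuous_const.mul (continuous_norm.pow 2))
  obtain ⟨C, hC⟩ := (isCompact_closedBall (0:E) 1).exists_bound_of_continuousOn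
    hgc.continuousOn
  have hC' : ∀ x ∈ Metric.closedBall (0:E) 1, |f x - μ / 2 * ‖x‖ ^ 2| ≤ C := fun x hx => hC x hx
  have hC0 : 0 ≤ C := le_trans (abs_nonneg _) (hC' 0 (Metric.mem_closedBall_self (by norm_num)))
  have hf00 : |f 0 - μ / 2 * ‖(0:E)‖ ^ 2| ≤ C := hC' 0 (Metric.mem_closedBall_self (by norm_num))
  have hf0 : |f 0| ≤ C := by simpa using hf00
  rw [abs_le] at hf0
  have hglb : ∀ x : E, 1 ≤ ‖x‖ → -(2 * C) * ‖x‖ ≤ f x - μ / 2 * ‖x‖ ^ 2 := by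
    intro x hx
    have hx0 : 0 < ‖x‖ := lt_of_lt_of_le one_pos hx
    have ha0 : 0 < ‖x‖⁻¹ := inv_pos.mpr hx0
    have hax : ‖x‖⁻¹ * ‖x‖ = 1 := inv_mul_cancel₀ (ne_of_gt hx0)
    have hmem : ‖x‖⁻¹ • x ∈ Metric.closedBall (0:E) 1 := by
      rw [Metric.mem_closedBall, dist_zero_right, norm_smul, Real.norm_eq_abs,
        abs_of_pos ha0, hax]
    have hgu := hC' _ hmem
    rw [abs_le] at hgu
    have hnu : ‖(‖x‖⁻¹ • x)‖ = 1 := by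
      rw [norm_smul, Real.norm_eq_abs, abs_of_pos ha0, hax]
    rw [hnu] at hgu
    have hcv := hf.2 (Set.mem_univ x) (Set.mem_univ (0:E)) (le_of_lt ha0)
      (by nlinarith : (0:ℝ) ≤ 1 - ‖x‖⁻¹) (by ring)
    simp only [smul_zero, add_zero, smul_eq_mul, norm_zero] at hcv
    rw [hnu] at hcv
    have ha1 : ‖x‖⁻¹ ≤ 1 := by nlinarith
    have key : -C ≤ ‖x‖⁻¹ * (f x - μ / 2 * ‖x‖ ^ 2) + (1 - ‖x‖⁻¹) * (f 0 - μ / 2 * 0 ^ 2) :=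
      le_trans hgu.1 hcv
    have h1' : -C - (1 - ‖x‖⁻¹) * f 0 ≤ ‖x‖⁻¹ * (f x - μ / 2 * ‖x‖ ^ 2) := by nlinarith
    have hb : (1 - ‖x‖⁻¹) * f 0 ≤ C := by
      nlinarith [mul_le_mul_of_nonneg_left hf0.2 (by linarith : (0:ℝ) ≤ 1 - ‖x‖⁻¹),
        mul_nonneg (le_of_lt ha0) hC0]
    have h2' : -(2*C) ≤ ‖x‖⁻¹ * (f x - μ / 2 * ‖x‖ ^ 2) := by linarith
    have := mul_le_mul_of_nonneg_left h2' (le_of_lt hx0)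
    calc -(2*C) * ‖x‖ = ‖x‖ * (-(2*C)) := by ring
    _ ≤ ‖x‖ * (‖x‖⁻¹ * (f x - μ / 2 * ‖x‖ ^ 2)) := this
    _ = (‖x‖⁻¹ * ‖x‖) * (f x - μ / 2 * ‖x‖ ^ 2) := by ring
    _ = f x - μ / 2 * ‖x‖ ^ 2 := by rw [hax, one_mul]
  set R : ℝ := max 1 (2 / μ * (2 * C + |f 0| + 1)) with hR
  have hR1 : 1 ≤ R := le_max_left _ _
  have hcoer : ∀ x : E, R < ‖x‖ → f 0 ≤ f x := by
    intro x hx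
    have hx1 : 1 ≤ ‖x‖ := le_trans hR1 (le_of_lt hx)
    have h1 := hglb x hx1
    have h2 : 2 / μ * (2 * C + |f 0| + 1) ≤ ‖x‖ := le_trans (le_max_right _ _) (le_of_lt hx)
    have h3 : 2 * C + |f 0| + 1 ≤ μ / 2 * ‖x‖ := by
      rw [div_mul_eq_mul_div, div_le_iff₀ hμ] at h2
      linarith
    have habs := le_abs_self (f 0)
    have h4 : ‖x‖ * (2 * C + |f 0| + 1) ≤ ‖x‖ * (μ / 2 * ‖x‖) :=
      mul_le_mul_of_nonneg_left h3 (by linarith)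
    have h5 : 1 * (|f 0| + 1) ≤ ‖x‖ * (|f 0| + 1) :=
      mul_le_mul_of_nonneg_right hx1 (by positivity)
    nlinarith [h4, h5, h1, habs]
  have hne : (Metric.closedBall (0:E) R).Nonempty := ⟨0, by simp; linarith⟩
  obtain ⟨x₀, hx₀mem, hx₀⟩ := (isCompact_closedBall (0:E) R).exists_isMinOn hne
    hfc.continuousOn
  refine ⟨x₀, fun x => ?_⟩
  rcases le_or_gt ‖x‖ R with h | h
  · exact isMinOn_iff.mp hx₀ x (by rwa [Metric.mem_closedBall, dist_zero_right])
  · exact le_trans (isMinOn_iff.mp hx₀ 0 (by simp; linarith)) (hcoer x h)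

/-- The largest eigenvalue of a (positive semidefinite symmetric) matrix, as the
operator norm of the induced linear map between Euclidean spaces. -/
noncomputable def lambdaMax {m : ℕ} (M : Matrix (Fin m) (Fin m) ℝ) : ℝ :=
  ‖LinearMap.toContinuousLinearMap (Matrix.toEuclideanLin M)‖

set_option maxHeartbeats 1000000 in
/-- Let `G : ℝ^m → ℝ` be `μ`-strongly convex (`μ > 0`) and `S` a symmetric positive
semidefinite `m × m` matrix.  Then for each `y` the function `λ ↦ G(λ) + ⟪y, S λ⟫` has a
unique minimizer `λ(y)`, and `F(y) = sup_λ (−G(λ) − ⟪y, S λ⟫) = −(G(λ(y)) + ⟪y, S λ(y)⟫)`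
is real-valued, convex, and differentiable with `∇F(y) = −S λ(y)`.  Moreover `y ↦ λ(y)`
is `(λmax(S)/μ)`-Lipschitz and `F` is `(λmax(S)²/μ)`-smooth. -/
theorem stmt4 {m : ℕ} (μ : ℝ) (hμ : 0 < μ)
    (G : EuclideanSpace ℝ (Fin m) → ℝ)
    (hG : ConvexOn ℝ Set.univ (fun lam => G lam - μ / 2 * ‖lam‖ ^ 2))
    (S : Matrix (Fin m) (Fin m) ℝ) (hSsymm : S.IsSymm) (hSpsd : S.PosSemidef)
    (F : EuclideanSpace ℝ (Fin m) → ℝ)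
    (hF : ∀ y, F y = ⨆ lam : EuclideanSpace ℝ (Fin m),
      (-G lam - ⟪y, Matrix.toEuclideanLin S lam⟫)) :
    -- unique minimizer of `λ ↦ G(λ) + ⟪y, S λ⟫`
    (∀ y : EuclideanSpace ℝ (Fin m), ∃! lam₀ : EuclideanSpace ℝ (Fin m),
        ∀ lam, G lam₀ + ⟪y, Matrix.toEuclideanLin S lam₀⟫
          ≤ G lam + ⟪y, Matrix.toEuclideanLin S lam⟫) ∧
    -- real-valued: the supremand is bounded above, and the sup equals the value at λ(y)
    (∀ y : EuclideanSpace ℝ (Fin m), BddAbove (Set.range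
        fun lam : EuclideanSpace ℝ (Fin m) => -G lam - ⟪y, Matrix.toEuclideanLin S lam⟫)) ∧
    (∀ y lam₀,
        (∀ lam, G lam₀ + ⟪y, Matrix.toEuclideanLin S lam₀⟫
          ≤ G lam + ⟪y, Matrix.toEuclideanLin S lam⟫) →
        F y = -(G lam₀ + ⟪y, Matrix.toEuclideanLin S lam₀⟫)) ∧
    ConvexOn ℝ Set.univ F ∧
    Differentiable ℝ F ∧
    -- gradient formula `∇F(y) = −S λ(y)`
    (∀ y lam₀,
        (∀ lam, G lam₀ + ⟪y, Matrix.toEuclideanLin S lam₀⟫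
          ≤ G lam + ⟪y, Matrix.toEuclideanLin S lam⟫) →
        gradient F y = -(Matrix.toEuclideanLin S lam₀)) ∧
    -- `y ↦ λ(y)` is `(λmax(S)/μ)`-Lipschitz
    (∀ y y' lam₀ lam₀',
        (∀ lam, G lam₀ + ⟪y, Matrix.toEuclideanLin S lam₀⟫
          ≤ G lam + ⟪y, Matrix.toEuclideanLin S lam⟫) →
        (∀ lam, G lam₀' + ⟪y', Matrix.toEuclideanLin S lam₀'⟫
          ≤ G lam + ⟪y', Matrix.toEuclideanLin S lam⟫) →
        ‖lam₀ - lam₀'‖ ≤ lambdaMax S / μ * ‖y - y'‖) ∧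
    -- `F` is `(λmax(S)²/μ)`-smooth
    (∀ y y' : EuclideanSpace ℝ (Fin m),
        ‖gradient F y - gradient F y'‖ ≤ lambdaMax S ^ 2 / μ * ‖y - y'‖) := by
  have hK0 : 0 ≤ (lambdaMax S) := norm_nonneg _
  have hAnorm : ∀ v : EuclideanSpace ℝ (Fin m), ‖(Matrix.toEuclideanLin S) v‖ ≤ (lambdaMax S) * ‖v‖ := by
    intro v
    calc ‖(Matrix.toEuclideanLin S) v‖ = ‖(LinearMap.toContinuousLinearMap ((Matrix.toEuclideanLin S))) v‖ := by
          rw [LinearMap.coe_toContinuousLinearMap']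
    _ ≤ ‖LinearMap.toContinuousLinearMap ((Matrix.toEuclideanLin S))‖ * ‖v‖ := ContinuousLinearMap.le_opNorm _ v
    _ = (lambdaMax S) * ‖v‖ := rfl
  have hinner : ∀ u v : EuclideanSpace ℝ (Fin m), ⟪u, (Matrix.toEuclideanLin S) v⟫ ≤ ‖u‖ * ((lambdaMax S) * ‖v‖) := fun u v =>
    (real_inner_le_norm u ((Matrix.toEuclideanLin S) v)).trans (mul_le_mul_of_nonneg_left (hAnorm v) (norm_nonneg u))
  have hconv : ∀ y : EuclideanSpace ℝ (Fin m), ConvexOn ℝ Set.univ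
      (fun lam => (G lam + ⟪y, (Matrix.toEuclideanLin S) lam⟫) - μ / 2 * ‖lam‖ ^ 2) := by
    intro y
    have hlin : ConvexOn ℝ Set.univ (fun lam : EuclideanSpace ℝ (Fin m) => ⟪y, (Matrix.toEuclideanLin S) lam⟫) := by
      refine ⟨convex_univ, fun u _ v _ a b ha hb hab => le_of_eq ?_⟩
      simp only [map_add, LinearMap.map_smul, inner_add_right, real_inner_smul_right,
        smul_eq_mul]
    have h2 := hG.add hlin
    have hfeq : (fun lam => (G lam + ⟪y, (Matrix.toEuclideanLin S) lam⟫) - μ / 2 * ‖lam‖ ^ 2)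
        = ((fun lam => G lam - μ / 2 * ‖lam‖ ^ 2) + fun lam => ⟪y, (Matrix.toEuclideanLin S) lam⟫) := by
      funext lam
      simp only [Pi.add_apply]
      ring
    rw [hfeq]
    exact h2
  have hmin_ex : ∀ y : EuclideanSpace ℝ (Fin m), ∃ lam₀,
      ∀ lam, G lam₀ + ⟪y, (Matrix.toEuclideanLin S) lam₀⟫ ≤ G lam + ⟪y, (Matrix.toEuclideanLin S) lam⟫ := by
    intro y
    obtain ⟨lam₀, h⟩ := aux_exists_min hμ (hconv y)
    exact ⟨lam₀, h⟩
  have hsq : ∀ (y lam₀ : EuclideanSpace ℝ (Fin m)),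
      (∀ lam, G lam₀ + ⟪y, (Matrix.toEuclideanLin S) lam₀⟫ ≤ G lam + ⟪y, (Matrix.toEuclideanLin S) lam⟫) →
      ∀ lam, (G lam₀ + ⟪y, (Matrix.toEuclideanLin S) lam₀⟫) + μ / 2 * ‖lam - lam₀‖ ^ 2 ≤ G lam + ⟪y, (Matrix.toEuclideanLin S) lam⟫ := by
    intro y lam₀ h lam
    exact aux_min_ineq hμ (hconv y) h lam
  have huniq : ∀ (y lam₀ lam₁ : EuclideanSpace ℝ (Fin m)),
      (∀ lam, G lam₀ + ⟪y, (Matrix.toEuclideanLin S) lam₀⟫ ≤ G lam + ⟪y, (Matrix.toEuclideanLin S) lam⟫) →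
      (∀ lam, G lam₁ + ⟪y, (Matrix.toEuclideanLin S) lam₁⟫ ≤ G lam + ⟪y, (Matrix.toEuclideanLin S) lam⟫) → lam₁ = lam₀ := by
    intro y lam₀ lam₁ h h₁
    have h1 := hsq y lam₀ h lam₁
    have h2 := h₁ lam₀
    have hd2 : ‖lam₁ - lam₀‖ ^ 2 ≤ 0 := by nlinarith
    have hd : ‖lam₁ - lam₀‖ ^ 2 = 0 := le_antisymm hd2 (sq_nonneg _)
    exact sub_eq_zero.mp (norm_eq_zero.mp (sq_eq_zero_iff.mp hd))
  have hbdd : ∀ y : EuclideanSpace ℝ (Fin m), BddAbove (Set.range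
      fun lam : EuclideanSpace ℝ (Fin m) => -G lam - ⟪y, (Matrix.toEuclideanLin S) lam⟫) := by
    intro y
    obtain ⟨lam₀, h⟩ := hmin_ex y
    refine ⟨-(G lam₀ + ⟪y, (Matrix.toEuclideanLin S) lam₀⟫), ?_⟩
    rintro r ⟨lam, rfl⟩
    have hgoal : -G lam - ⟪y, (Matrix.toEuclideanLin S) lam⟫ ≤ -(G lam₀ + ⟪y, (Matrix.toEuclideanLin S) lam₀⟫) := by linarith [h lam]
    exact hgoal
  have hFval : ∀ (y lam₀ : EuclideanSpace ℝ (Fin m)),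
      (∀ lam, G lam₀ + ⟪y, (Matrix.toEuclideanLin S) lam₀⟫ ≤ G lam + ⟪y, (Matrix.toEuclideanLin S) lam⟫) →
      F y = -(G lam₀ + ⟪y, (Matrix.toEuclideanLin S) lam₀⟫) := by
    intro y lam₀ h
    rw [hF y]
    refine le_antisymm (ciSup_le fun lam => ?_) ?_
    · show -G lam - ⟪y, (Matrix.toEuclideanLin S) lam⟫ ≤ -(G lam₀ + ⟪y, (Matrix.toEuclideanLin S) lam₀⟫)
      linarith [h lam]
    · have h5 : -G lam₀ - ⟪y, (Matrix.toEuclideanLin S) lam₀⟫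
          ≤ ⨆ lam : EuclideanSpace ℝ (Fin m), (-G lam - ⟪y, (Matrix.toEuclideanLin S) lam⟫) :=
        le_ciSup (hbdd y) lam₀
      linarith
  have hLip : ∀ y y' lam₀ lam₀' : EuclideanSpace ℝ (Fin m),
      (∀ lam, G lam₀ + ⟪y, (Matrix.toEuclideanLin S) lam₀⟫ ≤ G lam + ⟪y, (Matrix.toEuclideanLin S) lam⟫) →
      (∀ lam, G lam₀' + ⟪y', (Matrix.toEuclideanLin S) lam₀'⟫ ≤ G lam + ⟪y', (Matrix.toEuclideanLin S) lam⟫) →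
      ‖lam₀ - lam₀'‖ ≤ (lambdaMax S) / μ * ‖y - y'‖ := by
    intro y y' lam₀ lam₀' h h'
    have h1 := hsq y lam₀ h lam₀'
    have h2 := hsq y' lam₀' h' lam₀
    have hnr : ‖lam₀' - lam₀‖ = ‖lam₀ - lam₀'‖ := norm_sub_rev _ _
    rw [hnr] at h1
    have hexp : ⟪y - y', (Matrix.toEuclideanLin S) (lam₀' - lam₀)⟫
        = ⟪y, (Matrix.toEuclideanLin S) lam₀'⟫ - ⟪y, (Matrix.toEuclideanLin S) lam₀⟫ - ⟪y', (Matrix.toEuclideanLin S) lam₀'⟫ + ⟪y', (Matrix.toEuclideanLin S) lam₀⟫ := by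
      rw [map_sub, inner_sub_left, inner_sub_right, inner_sub_right]
      ring
    have hi := hinner (y - y') (lam₀' - lam₀)
    rw [hexp, hnr] at hi
    have key : μ * ‖lam₀ - lam₀'‖ ^ 2 ≤ ‖y - y'‖ * ((lambdaMax S) * ‖lam₀ - lam₀'‖) := by nlinarith
    rcases eq_or_lt_of_le (norm_nonneg (lam₀ - lam₀')) with hd | hd
    · rw [← hd]
      positivity
    · rw [div_mul_eq_mul_div, le_div_iff₀ hμ]
      nlinarith
  obtain ⟨lamsel, hlamsel⟩ := Classical.axiomOfChoice hmin_ex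
  have hFsel : ∀ y : EuclideanSpace ℝ (Fin m), F y = -(G (lamsel y) + ⟪y, (Matrix.toEuclideanLin S) (lamsel y)⟫) :=
    fun y => hFval y (lamsel y) (hlamsel y)
  have hsandwich : ∀ y y' : EuclideanSpace ℝ (Fin m),
      0 ≤ F y' - F y + ⟪y' - y, (Matrix.toEuclideanLin S) (lamsel y)⟫ ∧
      F y' - F y + ⟪y' - y, (Matrix.toEuclideanLin S) (lamsel y)⟫ ≤ (lambdaMax S) ^ 2 / μ * ‖y' - y‖ ^ 2 := by
    intro y y'
    have e1 := hFsel y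
    have e2 := hFsel y'
    have m1 := hlamsel y (lamsel y')
    have m2 := hlamsel y' (lamsel y)
    have i1 : ⟪y' - y, (Matrix.toEuclideanLin S) (lamsel y)⟫ = ⟪y', (Matrix.toEuclideanLin S) (lamsel y)⟫ - ⟪y, (Matrix.toEuclideanLin S) (lamsel y)⟫ :=
      inner_sub_left _ _ _
    have i2 : ⟪y' - y, (Matrix.toEuclideanLin S) (lamsel y')⟫ = ⟪y', (Matrix.toEuclideanLin S) (lamsel y')⟫ - ⟪y, (Matrix.toEuclideanLin S) (lamsel y')⟫ :=
      inner_sub_left _ _ _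
    constructor
    · rw [e1, e2, i1]
      linarith
    · have heq : ⟪y' - y, (Matrix.toEuclideanLin S) (lamsel y)⟫ - ⟪y' - y, (Matrix.toEuclideanLin S) (lamsel y')⟫
          = ⟪y' - y, (Matrix.toEuclideanLin S) (lamsel y - lamsel y')⟫ := by
        rw [map_sub, inner_sub_right]
      have hi := hinner (y' - y) (lamsel y - lamsel y')
      have hlip := hLip y y' (lamsel y) (lamsel y') (hlamsel y) (hlamsel y')
      have hnr : ‖y - y'‖ = ‖y' - y‖ := norm_sub_rev _ _
      rw [hnr] at hlip
      calc F y' - F y + ⟪y' - y, (Matrix.toEuclideanLin S) (lamsel y)⟫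
          ≤ ⟪y' - y, (Matrix.toEuclideanLin S) (lamsel y - lamsel y')⟫ := by
            rw [← heq, e1, e2, i1, i2]
            linarith
      _ ≤ ‖y' - y‖ * ((lambdaMax S) * ‖lamsel y - lamsel y'‖) := hi
      _ ≤ ‖y' - y‖ * ((lambdaMax S) * ((lambdaMax S) / μ * ‖y' - y‖)) := by gcongr
      _ = (lambdaMax S) ^ 2 / μ * ‖y' - y‖ ^ 2 := by ring
  have hgrad : ∀ y : EuclideanSpace ℝ (Fin m), HasGradientAt F (-((Matrix.toEuclideanLin S) (lamsel y))) y := by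
    intro y
    rw [hasGradientAt_iff_isLittleO, Asymptotics.isLittleO_iff]
    intro c hc
    have hL : 0 ≤ (lambdaMax S) ^ 2 / μ := by positivity
    have hev : ∀ᶠ x' in nhds y, ‖x' - y‖ ≤ c / ((lambdaMax S) ^ 2 / μ + 1) := by
      have h1 : Metric.closedBall y (c / ((lambdaMax S) ^ 2 / μ + 1)) ∈ nhds y :=
        Metric.closedBall_mem_nhds y (by positivity)
      filter_upwards [h1] with x' hx'
      rw [Metric.mem_closedBall, dist_eq_norm] at hx'
      exact hx'
    filter_upwards [hev] with x' hx'
    have hs := hsandwich y x'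
    show ‖F x' - F y - ⟪-((Matrix.toEuclideanLin S) (lamsel y)), x' - y⟫‖ ≤ c * ‖x' - y‖
    have hval : F x' - F y - ⟪-((Matrix.toEuclideanLin S) (lamsel y)), x' - y⟫
        = F x' - F y + ⟪x' - y, (Matrix.toEuclideanLin S) (lamsel y)⟫ := by
      rw [inner_neg_left, real_inner_comm]
      ring
    rw [hval, Real.norm_eq_abs, abs_of_nonneg hs.1]
    have h2 := hs.2
    have h3 : ‖x' - y‖ * ‖x' - y‖ ≤ (c / ((lambdaMax S) ^ 2 / μ + 1)) * ‖x' - y‖ :=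
      mul_le_mul_of_nonneg_right hx' (norm_nonneg _)
    have h4 : ((lambdaMax S) ^ 2 / μ) * (c / ((lambdaMax S) ^ 2 / μ + 1)) ≤ c := by
      rw [mul_div_assoc', div_le_iff₀ (by positivity)]
      nlinarith [le_of_lt hc]
    have h5 : (0:ℝ) ≤ ‖x' - y‖ := norm_nonneg _
    calc F x' - F y + ⟪x' - y, (Matrix.toEuclideanLin S) (lamsel y)⟫
        ≤ (lambdaMax S) ^ 2 / μ * ‖x' - y‖ ^ 2 := h2
    _ = (lambdaMax S) ^ 2 / μ * (‖x' - y‖ * ‖x' - y‖) := by ring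
    _ ≤ (lambdaMax S) ^ 2 / μ * ((c / ((lambdaMax S) ^ 2 / μ + 1)) * ‖x' - y‖) :=
        mul_le_mul_of_nonneg_left h3 hL
    _ = ((lambdaMax S) ^ 2 / μ * (c / ((lambdaMax S) ^ 2 / μ + 1))) * ‖x' - y‖ := by ring
    _ ≤ c * ‖x' - y‖ := mul_le_mul_of_nonneg_right h4 h5
  have hgradval : ∀ y : EuclideanSpace ℝ (Fin m), gradient F y = -((Matrix.toEuclideanLin S) (lamsel y)) :=
    fun y => (hgrad y).gradient
  refine ⟨?_, hbdd, hFval, ?_, ?_, ?_, hLip, ?_⟩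
  · intro y
    obtain ⟨lam₀, h⟩ := hmin_ex y
    exact ⟨lam₀, h, fun lam₁ h₁ => huniq y lam₀ lam₁ h h₁⟩
  · refine ⟨convex_univ, fun x _ y _ a b ha hb hab => ?_⟩
    obtain ⟨lam₀, hlam₀⟩ := hmin_ex (a • x + b • y)
    have hx1 : -G lam₀ - ⟪x, (Matrix.toEuclideanLin S) lam₀⟫ ≤ F x := by
      rw [hF x]
      exact le_ciSup (hbdd x) lam₀
    have hy1 : -G lam₀ - ⟪y, (Matrix.toEuclideanLin S) lam₀⟫ ≤ F y := by
      rw [hF y]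
      exact le_ciSup (hbdd y) lam₀
    have hval : F (a • x + b • y) = -(G lam₀ + ⟪a • x + b • y, (Matrix.toEuclideanLin S) lam₀⟫) :=
      hFval _ lam₀ hlam₀
    have hexp : ⟪a • x + b • y, (Matrix.toEuclideanLin S) lam₀⟫ = a * ⟪x, (Matrix.toEuclideanLin S) lam₀⟫ + b * ⟪y, (Matrix.toEuclideanLin S) lam₀⟫ := by
      rw [inner_add_left, real_inner_smul_left, real_inner_smul_left]
    rw [hval, hexp]
    simp only [smul_eq_mul]
    calc -(G lam₀ + (a * ⟪x, (Matrix.toEuclideanLin S) lam₀⟫ + b * ⟪y, (Matrix.toEuclideanLin S) lam₀⟫))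
        = a * (-G lam₀ - ⟪x, (Matrix.toEuclideanLin S) lam₀⟫) + b * (-G lam₀ - ⟪y, (Matrix.toEuclideanLin S) lam₀⟫) := by
          linear_combination (G lam₀) * hab
    _ ≤ a * F x + b * F y :=
        add_le_add (mul_le_mul_of_nonneg_left hx1 ha) (mul_le_mul_of_nonneg_left hy1 hb)
  · exact fun y => (hgrad y).differentiableAt
  · intro y lam₀ h
    have heq : lam₀ = lamsel y := huniq y (lamsel y) lam₀ (hlamsel y) h
    rw [heq, hgradval y]
  · intro y y'
    rw [hgradval y, hgradval y']
    have h1 : -((Matrix.toEuclideanLin S) (lamsel y)) - -((Matrix.toEuclideanLin S) (lamsel y')) = (Matrix.toEuclideanLin S) (lamsel y' - lamsel y) := by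
      rw [map_sub]
      abel
    rw [h1]
    calc ‖(Matrix.toEuclideanLin S) (lamsel y' - lamsel y)‖ ≤ (lambdaMax S) * ‖lamsel y' - lamsel y‖ := hAnorm _
    _ ≤ (lambdaMax S) * ((lambdaMax S) / μ * ‖y' - y‖) := by
        gcongr
        exact hLip y' y (lamsel y') (lamsel y) (hlamsel y') (hlamsel y)
    _ = (lambdaMax S) ^ 2 / μ * ‖y - y'‖ := by rw [norm_sub_rev y' y]; ring
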